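/- Suppose (q_a)_{a∈I} is a quasipolynomial solution of the Q-system such that each q_a has degree e_a ≥ 1 with constant leading coefficient c_a > 0. Then for every a ∈ I one has Σ_{b∈I} C(a,b)·e_b = 2; equivalently, 2·e_a − 2 = Σ_{b : C(a,b)<0} (−C(a,b))·e_b. In particular, if C is invertible as a matrix over ℚ, then e_a = 2·Σ_{b∈I} (C⁻¹)(a,b) for every a ∈ I. -/

import Mathlib

open Filter Polynomial Finset

lemma fdiv_bounds {b : ℤ} (a : ℤ) (hb : b < 0) :
    b * (a.fdiv b + 1) < a ∧ a ≤ b * a.fdiv b := by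
  obtain ⟨n, rfl⟩ : ∃ n : ℕ, b = Int.negSucc n := by
    cases b with
    | ofNat m => exact absurd hb (by simp)
    | negSucc n => exact ⟨n, rfl⟩
  cases a with
  | ofNat m =>
    cases m with
    | zero => simp [Int.fdiv]
    | succ m =>
      show Int.negSucc n * (Int.negSucc (m / (n+1)) + 1) < _ ∧ _ ≤ Int.negSucc n * Int.negSucc (m / (n+1))
      have h1 := Nat.div_add_mod m (n+1)
      have h2 := Nat.mod_lt m (y := n+1) (by omega)
      generalize m / (n+1) = d at *
      generalize m % (n+1) = r at *
      constructor
      · simp [Int.negSucc_eq]; push_cast; nlinarith [Int.ofNat_nonneg d]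
      · simp [Int.negSucc_eq]; push_cast; nlinarith
  | negSucc m =>
    show Int.negSucc n * (((m+1) / (n+1) : ℕ) + 1) < _ ∧ _ ≤ Int.negSucc n * ((m+1) / (n+1) : ℕ)
    have h1 := Nat.div_add_mod (m+1) (n+1)
    have h2 := Nat.mod_lt (m+1) (y := n+1) (by omega)
    generalize (m+1) / (n+1) = d at *
    generalize (m+1) % (n+1) = r at *
    constructor
    · simp [Int.negSucc_eq]; push_cast; nlinarith
    · simp [Int.negSucc_eq]; push_cast; nlinarith


lemma qp_tendsto {q : ℤ → ℝ} {e ℓ : ℕ} {c : ℝ} (hℓ : 1 ≤ ℓ) {p : ℤ → Polynomial ℝ}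
    (hp : ∀ j : ℤ, 0 ≤ j → j < (ℓ : ℤ) → (p j).natDegree = e ∧ (p j).coeff e = c)
    (hq : ∀ m : ℤ, q m = (p (m % (ℓ : ℤ))).eval (m : ℝ)) :
    Tendsto (fun m : ℤ => q m / (m : ℝ) ^ e) atTop (nhds c) := by
  set s : ℕ → Polynomial ℝ := fun i => p i - Polynomial.C c * Polynomial.X ^ e with hs
  have hsd : ∀ i ∈ Finset.range ℓ, (s i).degree < (Polynomial.X ^ e : Polynomial ℝ).degree := by
    intro i hi
    rw [Polynomial.degree_X_pow, Polynomial.degree_lt_iff_coeff_zero]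
    intro n hn
    obtain ⟨hd, hcoef⟩ := hp i (by positivity) (by exact_mod_cast Finset.mem_range.mp hi)
    rcases eq_or_lt_of_le hn with h | h
    · simp [hs, ← h, hcoef]
    · have hne : n ≠ e := by exact_mod_cast h.ne'
      have hlt : e < n := by exact_mod_cast h
      simp [hs, Polynomial.coeff_X_pow, hne,
        Polynomial.coeff_eq_zero_of_natDegree_lt (hd ▸ hlt)]
  have htend : ∀ i ∈ Finset.range ℓ,
      Tendsto (fun m : ℤ => |(s i).eval (m:ℝ)| / |(m:ℝ)|^e) atTop (nhds 0) := by
    intro i hi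
    have h0 := Polynomial.div_tendsto_zero_of_degree_lt (s i) (Polynomial.X ^ e) (hsd i hi)
    have h1 : Tendsto (fun x : ℝ => (s i).eval x / x ^ e) atTop (nhds 0) := by
      simpa using h0
    have h2 : Tendsto (fun m : ℤ => (s i).eval (m:ℝ) / (m:ℝ)^e) atTop (nhds 0) :=
      h1.comp tendsto_intCast_atTop_atTop
    simpa [abs_div, abs_pow] using h2.abs
  have hg : Tendsto (fun m : ℤ => ∑ i ∈ Finset.range ℓ, |(s i).eval (m:ℝ)| / |(m:ℝ)|^e)
      atTop (nhds 0) := by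
    simpa using tendsto_finset_sum (Finset.range ℓ) htend
  have hbound : ∀ᶠ m : ℤ in atTop,
      |q m / (m:ℝ)^e - c| ≤ ∑ i ∈ Finset.range ℓ, |(s i).eval (m:ℝ)| / |(m:ℝ)|^e := by
    filter_upwards [eventually_ge_atTop (1 : ℤ)] with m hm
    have hm0 : (0:ℝ) < (m:ℝ) := by exact_mod_cast hm
    have hme : (0:ℝ) < (m:ℝ)^e := by positivity
    set j : ℕ := (m % (ℓ : ℤ)).toNat with hj
    have hjz : ((j : ℤ)) = m % (ℓ : ℤ) :=
      Int.toNat_of_nonneg (Int.emod_nonneg m (by exact_mod_cast hℓ.trans_lt' Nat.zero_lt_one |>.ne'))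
    have hjr : j ∈ Finset.range ℓ := by
      rw [Finset.mem_range]
      have := Int.emod_lt_of_pos m (b := (ℓ:ℤ)) (by exact_mod_cast hℓ)
      omega
    have hkey : q m / (m:ℝ)^e - c = (s j).eval (m:ℝ) / (m:ℝ)^e := by
      rw [hq m, ← hjz, hs]
      field_simp
      simp only [Polynomial.eval_sub, Polynomial.eval_mul, Polynomial.eval_C, Polynomial.eval_pow, Polynomial.eval_X]
      ring
    rw [hkey, abs_div, abs_of_pos hme]
    have : |(m:ℝ)|^e = (m:ℝ)^e := by rw [abs_of_pos hm0]
    rw [← this]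
    exact Finset.single_le_sum (f := fun i => |(s i).eval (m:ℝ)| / |(m:ℝ)|^e)
      (fun i _ => by positivity) hjr
  have := squeeze_zero_norm' (f := fun m : ℤ => q m / (m:ℝ)^e - c) (by simpa [Real.norm_eq_abs] using hbound) hg
  have h3 : Tendsto (fun m : ℤ => (q m / (m:ℝ)^e - c) + c) atTop (nhds (0 + c)) :=
    this.add tendsto_const_nhds
  simpa using h3



lemma qp_shift {q : ℤ → ℝ} {e : ℕ} {c : ℝ} (j : ℤ)
    (hq : Tendsto (fun m : ℤ => q m / (m : ℝ) ^ e) atTop (nhds c)) :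
    Tendsto (fun m : ℤ => q (m + j) / (m : ℝ) ^ e) atTop (nhds c) := by
  have h1 : Tendsto (fun m : ℤ => q (m + j) / ((m + j : ℤ) : ℝ) ^ e) atTop (nhds c) :=
    hq.comp (tendsto_atTop_add_const_right atTop j tendsto_id)
  have h2 : Tendsto (fun m : ℤ => (((m + j : ℤ) : ℝ) / m) ^ e) atTop (nhds 1) := by
    have h : Tendsto (fun m : ℤ => ((m + j : ℤ) : ℝ) / m) atTop (nhds 1) := by
      have hb : Tendsto (fun m : ℤ => 1 + (j : ℝ) / m) atTop (nhds (1 + 0)) :=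
        tendsto_const_nhds.add (tendsto_const_nhds.div_atTop tendsto_intCast_atTop_atTop)
      rw [add_zero] at hb
      apply hb.congr'
      filter_upwards [eventually_ge_atTop (1 : ℤ)] with m hm
      have hne : (m : ℝ) ≠ 0 := by
        have : (0:ℝ) < (m:ℝ) := by exact_mod_cast hm.trans_lt' (by norm_num)
        exact this.ne'
      push_cast
      field_simp
    simpa using h.pow e
  have h3 := h1.mul h2
  rw [mul_one] at h3
  apply h3.congr'
  filter_upwards [eventually_ge_atTop (1 + |j|)] with m hm
  have hm1 : (1:ℤ) ≤ m := by have := abs_nonneg j; omega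
  have hmj1 : (1:ℤ) ≤ m + j := by have := neg_abs_le j; omega
  have hBne : ((m + j : ℤ) : ℝ) ≠ 0 := by
    have : (0:ℝ) < ((m+j:ℤ):ℝ) := by exact_mod_cast hmj1.trans_lt' (by norm_num)
    exact this.ne'
  rw [div_pow, div_mul_div_comm, mul_comm (q (m+j)) _, mul_div_mul_left _ _ (pow_ne_zero _ hBne)]

lemma qp_comp_fdiv {q : ℤ → ℝ} {e : ℕ} {c : ℝ}
    (hq : Tendsto (fun m : ℤ => q m / (m : ℝ) ^ e) atTop (nhds c))
    {x y : ℤ} (k : ℤ) (hx : x < 0) (hy : y < 0) :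
    Tendsto (fun m : ℤ => q ((x * m - k).fdiv y) / (m : ℝ) ^ e) atTop
      (nhds (c * ((x : ℝ) / y) ^ e)) := by
  set n : ℤ → ℤ := fun m => (x * m - k).fdiv y with hn
  have hy0 : (y:ℝ) < 0 := by exact_mod_cast hy
  have hρ : (0:ℝ) < (x:ℝ) / y :=
    div_pos_of_neg_of_neg (by exact_mod_cast hx) hy0
  have hub : ∀ m : ℤ, (n m : ℝ) ≤ ((x:ℝ) * m - k) / y := by
    intro m
    have h := (fdiv_bounds (x * m - k) hy).2
    have h' : ((x * m - k : ℤ) : ℝ) ≤ (y:ℝ) * (n m : ℝ) := by exact_mod_cast h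
    rw [le_div_iff_of_neg hy0]
    push_cast at h' ⊢
    linarith
  have hlb : ∀ m : ℤ, ((x:ℝ) * m - k) / y - 1 < (n m : ℝ) := by
    intro m
    have h := (fdiv_bounds (x * m - k) hy).1
    have h' : (y:ℝ) * ((n m : ℝ) + 1) < ((x * m - k : ℤ) : ℝ) := by exact_mod_cast h
    have : ((x * m - k : ℤ):ℝ) / y < (n m : ℝ) + 1 := by
      rw [div_lt_iff_of_neg hy0]
      linarith
    push_cast at this ⊢
    linarith
  -- the linear lower bound tends to atTop
  have hlin : Tendsto (fun m : ℤ => ((x:ℝ)/y) * m - (k:ℝ)/y - 1) atTop atTop := by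
    apply tendsto_atTop_add_const_right
    apply tendsto_atTop_add_const_right
    exact (tendsto_intCast_atTop_atTop (R := ℝ)).const_mul_atTop hρ
  have htopR : Tendsto (fun m : ℤ => (n m : ℝ)) atTop atTop := by
    apply tendsto_atTop_mono' _ _ hlin
    filter_upwards with m
    have := hlb m
    have heq : ((x:ℝ) * m - k)/y = ((x:ℝ)/y) * m - (k:ℝ)/y := by ring
    rw [heq] at this
    linarith
  have htop : Tendsto n atTop atTop := by
    rwa [tendsto_intCast_atTop_iff] at htopR
  have hratio : Tendsto (fun m : ℤ => (n m : ℝ) / m) atTop (nhds ((x:ℝ)/y)) := by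
    have hhi : Tendsto (fun m : ℤ => ((x:ℝ)/y) - ((k:ℝ)/y) / m) atTop
        (nhds (((x:ℝ)/y) - 0)) :=
      tendsto_const_nhds.sub (tendsto_const_nhds.div_atTop tendsto_intCast_atTop_atTop)
    have hlo : Tendsto (fun m : ℤ => ((x:ℝ)/y) - ((k:ℝ)/y) / m - 1 / m) atTop
        (nhds (((x:ℝ)/y) - 0 - 0)) :=
      hhi.sub (tendsto_const_nhds.div_atTop tendsto_intCast_atTop_atTop)
    rw [sub_zero] at hhi
    rw [sub_zero, sub_zero] at hlo
    apply tendsto_of_tendsto_of_tendsto_of_le_of_le' hlo hhi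
    · filter_upwards [eventually_ge_atTop (1:ℤ)] with m hm
      have hm0 : (0:ℝ) < (m:ℝ) := by exact_mod_cast hm.trans_lt' (by norm_num)
      have hmne : (m:ℝ) ≠ 0 := hm0.ne'
      rw [le_div_iff₀ hm0]
      have hex : ((x:ℝ)/y - (k:ℝ)/y / m - 1/m) * m = (x:ℝ)/y * m - (k:ℝ)/y - 1 := by
        rw [sub_mul, sub_mul, div_mul_cancel₀ _ hmne, one_div, inv_mul_cancel₀ hmne]
      have hr : ((x:ℝ)*m - k)/y = (x:ℝ)/y * m - (k:ℝ)/y := by ring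
      rw [hex]
      linarith [(hlb m).le, hr ▸ (hlb m).le]
    · filter_upwards [eventually_ge_atTop (1:ℤ)] with m hm
      have hm0 : (0:ℝ) < (m:ℝ) := by exact_mod_cast hm.trans_lt' (by norm_num)
      have hmne : (m:ℝ) ≠ 0 := hm0.ne'
      rw [div_le_iff₀ hm0]
      have hex : ((x:ℝ)/y - (k:ℝ)/y / m) * m = (x:ℝ)/y * m - (k:ℝ)/y := by
        rw [sub_mul, div_mul_cancel₀ _ hmne]
      have hr : ((x:ℝ)*m - k)/y = (x:ℝ)/y * m - (k:ℝ)/y := by ring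
      rw [hex]
      linarith [hr ▸ (hub m)]
  have hfin := (hq.comp htop).mul (hratio.pow e)
  apply hfin.congr'
  filter_upwards [eventually_ge_atTop (1:ℤ), htop.eventually_ge_atTop 1] with m hm hnm
  have hm0 : (0:ℝ) < (m:ℝ) := by exact_mod_cast hm.trans_lt' (by norm_num)
  have hn0 : (0:ℝ) < ((n m : ℤ):ℝ) := by exact_mod_cast hnm.trans_lt' (by norm_num)
  show q (n m) / ((n m : ℤ):ℝ)^e * (((n m : ℤ):ℝ)/(m:ℝ))^e = q (n m) / (m:ℝ)^e
  rw [div_pow, div_mul_div_comm, mul_comm (q (n m)) _,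
    mul_div_mul_left _ _ (pow_ne_zero _ hn0.ne')]



set_option maxHeartbeats 1000000 in
lemma degree_core {q : ℤ → ℝ} {e d : ℕ} {c K : ℝ} (he : 1 ≤ e) (hc : 0 < c) (hK : 0 < K)
    (hq : Tendsto (fun m : ℤ => q m / (m:ℝ)^e) atTop (nhds c))
    (hFK : Tendsto (fun m : ℤ => (q m ^ 2 - q (m+1) * q (m-1)) / (m:ℝ)^d) atTop (nhds K)) :
    d + 2 = 2 * e := by
  set F : ℤ → ℝ := fun m => q m ^ 2 - q (m+1) * q (m-1) with hF
  set u : ℤ → ℝ := fun m => q (m+1) / q m with hu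
  set t : ℤ → ℝ := fun m => F m / (q m * q (m-1)) with ht
  have hq1 : Tendsto (fun m : ℤ => q (m+1) / (m:ℝ)^e) atTop (nhds c) := qp_shift 1 hq
  have hqm1 : Tendsto (fun m : ℤ => q (m-1) / (m:ℝ)^e) atTop (nhds c) := by
    have := qp_shift (-1) hq
    simpa [sub_eq_add_neg] using this
  -- eventual positivity and growth
  have hev : ∀ᶠ m : ℤ in atTop,
      0 < q m ∧ 0 < q (m-1) ∧ 0 < q (m+1) ∧ (c/2) * (m:ℝ)^e ≤ q m := by
    have h0 := hq.eventually (eventually_ge_nhds (show c/2 < c by linarith))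
    have h1 := hq1.eventually (eventually_gt_nhds (show (0:ℝ) < c by linarith))
    have h2 := hqm1.eventually (eventually_gt_nhds (show (0:ℝ) < c by linarith))
    filter_upwards [h0, h1, h2, eventually_ge_atTop (1:ℤ)] with m hm0 hm1 hm2 hm
    have hmp : (0:ℝ) < (m:ℝ) := by exact_mod_cast hm.trans_lt' (by norm_num)
    have hmep : (0:ℝ) < (m:ℝ)^e := by positivity
    have hqm : (c/2) * (m:ℝ)^e ≤ q m := (le_div_iff₀ hmep).mp hm0
    refine ⟨by nlinarith, ?_, ?_, hqm⟩
    · rcases div_pos_iff.mp hm2 with ⟨h, _⟩ | ⟨_, h⟩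
      · exact h
      · linarith
    · rcases div_pos_iff.mp hm1 with ⟨h, _⟩ | ⟨_, h⟩
      · exact h
      · linarith
  have hu1 : Tendsto u atTop (nhds 1) := by
    have h := hq1.div hq hc.ne'
    rw [div_self hc.ne'] at h
    apply h.congr'
    filter_upwards [hev, eventually_ge_atTop (1:ℤ)] with m hm hm1
    have hmp : (0:ℝ) < (m:ℝ) := by exact_mod_cast hm1.trans_lt' (by norm_num)
    have hmep : ((m:ℝ)^e) ≠ 0 := by positivity
    rw [hu]
    rw [Pi.div_apply, div_div_div_cancel_right₀ hmep]
  set L : ℝ := K / (c * c) with hL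
  have hL0 : 0 < L := by positivity
  have htt : Tendsto (fun m : ℤ => t m * (m:ℝ)^(2*e) / (m:ℝ)^d) atTop (nhds L) := by
    have h := hFK.div (hq.mul hqm1) (by positivity : (c*c) ≠ 0)
    apply h.congr'
    filter_upwards [hev, eventually_ge_atTop (1:ℤ)] with m hm hm1
    obtain ⟨hq0, hqm0, hqp0, _⟩ := hm
    have hmp : (0:ℝ) < (m:ℝ) := by exact_mod_cast hm1.trans_lt' (by norm_num)
    have h2e : (m:ℝ)^(2*e) = (m:ℝ)^e * (m:ℝ)^e := by rw [two_mul, pow_add]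
    rw [ht, h2e]
    simp only [Pi.div_apply]
    have hmene : ((m:ℝ)^e) ≠ 0 := by positivity
    have hmdne : ((m:ℝ)^d) ≠ 0 := by positivity
    field_simp
    rfl
  have htu : ∀ᶠ m : ℤ in atTop, t m = u (m-1) - u m := by
    filter_upwards [hev] with m hm
    obtain ⟨hq0, hqm0, _, _⟩ := hm
    rw [ht, hu, hF]
    simp only [sub_add_cancel]
    field_simp
  have hFpos : ∀ᶠ m : ℤ in atTop, 0 < F m := by
    have h := hFK.eventually (eventually_gt_nhds (show (0:ℝ) < K by linarith))
    filter_upwards [h, eventually_ge_atTop (1:ℤ)] with m hm hm1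
    have hmp : (0:ℝ) < (m:ℝ) := by exact_mod_cast hm1.trans_lt' (by norm_num)
    have : (0:ℝ) < (m:ℝ)^d := by positivity
    have := (div_pos_iff.mp hm).resolve_right (fun ⟨_, h2⟩ => absurd h2 this.not_gt)
    exact this.1
  have htpos : ∀ᶠ m : ℤ in atTop, 0 < t m := by
    filter_upwards [hFpos, hev] with m hm hm2
    obtain ⟨hq0, hqm0, _, _⟩ := hm2
    exact div_pos hm (by positivity)
  by_contra hne
  rcases (by omega : 2*e ≤ d + 1 ∨ d + 3 ≤ 2*e) with hcase | hcase
  · -- d too large: harmonic divergence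
    have hub : ∀ᶠ m : ℤ in atTop,
        (L/2) * (1/(m:ℝ)) ≤ t m ∧ 1/2 ≤ u m ∧ t m = u (m-1) - u m := by
      have h1 := htt.eventually (eventually_ge_nhds (show L/2 < L by linarith))
      have h2 := hu1.eventually (eventually_ge_nhds (show (1:ℝ)/2 < 1 by norm_num))
      filter_upwards [h1, h2, htu, htpos, eventually_ge_atTop (1:ℤ)] with m hm1 hm2 hm3 hm4 hm5
      refine ⟨?_, hm2, hm3⟩
      have hmp : (0:ℝ) < (m:ℝ) := by exact_mod_cast hm5.trans_lt' (by norm_num)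
      have hm1R : (1:ℝ) ≤ (m:ℝ) := by exact_mod_cast hm5
      have hmdne : ((m:ℝ)^d) ≠ 0 := by positivity
      have hpow : (m:ℝ)^(2*e) ≤ (m:ℝ)^(d+1) := pow_le_pow_right₀ hm1R hcase
      have hmono : t m * (m:ℝ)^(2*e) / (m:ℝ)^d ≤ t m * (m:ℝ)^(d+1) / (m:ℝ)^d := by
        apply div_le_div_of_nonneg_right ?_ (by positivity)
        exact mul_le_mul_of_nonneg_left hpow hm4.le
      have heq : t m * (m:ℝ)^(d+1) / (m:ℝ)^d = t m * m := by
        rw [pow_succ]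
        field_simp
      have : L/2 ≤ t m * m := by
        rw [heq] at hmono
        linarith
      rw [mul_one_div, div_le_iff₀ hmp]
      linarith
    obtain ⟨N0, hN0⟩ := eventually_atTop.mp hub
    set N : ℤ := max N0 1 with hNdef
    have hN : ∀ m : ℤ, N ≤ m →
        (L/2) * (1/(m:ℝ)) ≤ t m ∧ 1/2 ≤ u m ∧ t m = u (m-1) - u m :=
      fun m hm => hN0 m (le_trans (le_max_left _ _) hm)
    have hN1 : 1 ≤ N := le_max_right _ _
    have htel : ∀ n : ℕ, ∑ i ∈ Finset.range n, t (N + 1 + i) = u N - u (N + n) := by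
      intro n
      have hterm : ∀ i : ℕ, t (N + 1 + i) = u (N + i) - u (N + (i+1:ℕ)) := by
        intro i
        have h := (hN (N+1+i) (by omega)).2.2
        rw [h]
        congr 2
        · ring
        · push_cast
          ring
      rw [Finset.sum_congr rfl (fun i _ => hterm i)]
      have h := Finset.sum_range_sub' (f := fun i : ℕ => u (N + i)) n
      simpa using h
    have hB : ∀ n : ℕ, ∑ i ∈ Finset.range n, (L/2) * (1/((N:ℝ) + 1 + i)) ≤ u N - 1/2 := by
      intro n
      have h1 : ∑ i ∈ Finset.range n, (L/2) * (1/((N:ℝ) + 1 + i))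
          ≤ ∑ i ∈ Finset.range n, t (N + 1 + i) := by
        apply Finset.sum_le_sum
        intro i _
        have h := (hN (N+1+i) (by omega)).1
        have hcast : ((N + 1 + (i:ℤ) : ℤ) : ℝ) = (N:ℝ) + 1 + i := by push_cast; ring
        rw [hcast] at h
        exact h
      have h2 := htel n
      have h3 : 1/2 ≤ u (N + n) := (hN (N+n) (by omega)).2.1
      linarith
    set a : ℕ := (N+1).toNat with ha
    have haN : ((a:ℤ)) = N + 1 := Int.toNat_of_nonneg (by omega)
    have hsummable : Summable (fun i : ℕ => (L/2) * (1/((i + a : ℕ):ℝ))) := by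
      apply summable_of_sum_range_le (c := u N - 1/2)
      · intro i
        positivity
      · intro n
        refine le_trans (le_of_eq ?_) (hB n)
        apply Finset.sum_congr rfl
        intro i _
        congr 1
        have : ((i + a : ℕ) : ℝ) = (N:ℝ) + 1 + i := by
          have : ((i + a : ℕ) : ℤ) = N + 1 + i := by push_cast [haN]; ring
          exact_mod_cast congrArg (fun z : ℤ => (z:ℝ)) this
        rw [this]
    have hsum2 : Summable (fun i : ℕ => 1/((i + a : ℕ):ℝ)) := by
      have h := hsummable.mul_left (2/L)
      apply h.congr
      intro i
      have hLL : 2/L*(L/2) = 1 := by field_simp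
      rw [← mul_assoc, hLL, one_mul]
    have hsum3 : Summable (fun n : ℕ => 1/(n:ℝ)) := (summable_nat_add_iff a).mp hsum2
    exact Real.not_summable_one_div_natCast hsum3
  · -- d too small: q would be bounded
    set γ : ℝ := L + 1 with hγ
    have hγ0 : 0 < γ := by linarith
    have key3 : ∀ A : ℝ, 1 ≤ A → 1/(A+1)^3 ≤ 1/A^2 - 1/(A+1)^2 := by
      intro A hA
      have h0 : (0:ℝ) < A := by linarith
      have h1 : (0:ℝ) < A + 1 := by linarith
      rw [div_sub_div _ _ (by positivity) (by positivity),
        div_le_div_iff₀ (by positivity) (by positivity)]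
      nlinarith [sq_nonneg A, sq_nonneg (A+1)]
    have key2 : ∀ A : ℝ, 2 ≤ A → 1/A^2 ≤ 1/(A-1) - 1/A := by
      intro A hA
      have h0 : (0:ℝ) < A := by linarith
      have h1 : (0:ℝ) < A - 1 := by linarith
      rw [div_sub_div _ _ (by positivity) (by positivity),
        div_le_div_iff₀ (by positivity) (by positivity)]
      nlinarith
    have hub : ∀ᶠ m : ℤ in atTop,
        (0 < q m ∧ (c/2)*(m:ℝ) ≤ q m) ∧ 0 ≤ t m ∧ t m ≤ γ * (1/(m:ℝ)^3)
          ∧ t m = u (m-1) - u m := by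
      have h1 := htt.eventually (eventually_le_nhds (show L < γ by linarith))
      filter_upwards [h1, htu, htpos, hev, eventually_ge_atTop (1:ℤ)] with m hm1 hm2 hm3 hm4 hm5
      obtain ⟨hq0, hqm0, hqp0, hqg⟩ := hm4
      have hmp : (0:ℝ) < (m:ℝ) := by exact_mod_cast hm5.trans_lt' (by norm_num)
      have hm1R : (1:ℝ) ≤ (m:ℝ) := by exact_mod_cast hm5
      have hqlin : (c/2)*(m:ℝ) ≤ q m := by
        have hse : (m:ℝ) ≤ (m:ℝ)^e := le_self_pow₀ hm1R (by omega)
        nlinarith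
      refine ⟨⟨hq0, hqlin⟩, hm3.le, ?_, hm2⟩
      have hmdne : ((m:ℝ)^d) ≠ 0 := by positivity
      have hpow : (m:ℝ)^(d+3) ≤ (m:ℝ)^(2*e) := pow_le_pow_right₀ hm1R hcase
      have hmono : t m * (m:ℝ)^(d+3)/(m:ℝ)^d ≤ t m * (m:ℝ)^(2*e)/(m:ℝ)^d := by
        apply div_le_div_of_nonneg_right ?_ (by positivity)
        exact mul_le_mul_of_nonneg_left hpow hm3.le
      have heq : t m * (m:ℝ)^(d+3)/(m:ℝ)^d = t m * (m:ℝ)^3 := by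
        rw [pow_add]
        field_simp
      rw [mul_one_div, le_div_iff₀ (by positivity : (0:ℝ) < (m:ℝ)^3)]
      rw [heq] at hmono
      linarith
    obtain ⟨N0, hN0⟩ := eventually_atTop.mp hub
    set N : ℤ := max N0 2 with hNdef
    have hN : ∀ m : ℤ, N ≤ m →
        (0 < q m ∧ (c/2)*(m:ℝ) ≤ q m) ∧ 0 ≤ t m ∧ t m ≤ γ * (1/(m:ℝ)^3)
          ∧ t m = u (m-1) - u m :=
      fun m hm => hN0 m (le_trans (le_max_left _ _) hm)
    have hN2 : 2 ≤ N := le_max_right _ _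
    have htel : ∀ m : ℤ, N ≤ m → ∀ n : ℕ,
        ∑ i ∈ Finset.range n, t (m + 1 + i) = u m - u (m + n) := by
      intro m hm n
      have hterm : ∀ i : ℕ, t (m + 1 + i) = u (m + i) - u (m + (i+1:ℕ)) := by
        intro i
        have h := (hN (m+1+i) (by omega)).2.2.2
        rw [h]
        congr 2
        · ring
        · push_cast
          ring
      rw [Finset.sum_congr rfl (fun i _ => hterm i)]
      have h := Finset.sum_range_sub' (f := fun i : ℕ => u (m + i)) n
      simpa using h
    have hcube : ∀ m : ℤ, N ≤ m → ∀ n : ℕ,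
        ∑ i ∈ Finset.range n, t (m + 1 + i) ≤ γ * (1/(m:ℝ)^2) := by
      intro m hm n
      have hstep : ∀ i : ℕ, t (m + 1 + i) ≤
          γ * (1/((m:ℝ)+i)^2) - γ * (1/((m:ℝ)+(i+1:ℕ))^2) := by
        intro i
        have h := (hN (m+1+i) (by omega)).2.2.1
        have hA : (1:ℝ) ≤ (m:ℝ) + i := by
          have : (1:ℤ) ≤ m + i := by omega
          exact_mod_cast this
        have hk := key3 ((m:ℝ)+i) hA
        have hc1 : ((m + 1 + (i:ℤ) : ℤ) : ℝ) = (m:ℝ) + i + 1 := by push_cast; ring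
        rw [hc1] at h
        have hcast2 : ((m:ℝ)+(i+1:ℕ)) = (m:ℝ) + i + 1 := by push_cast; ring
        rw [hcast2]
        calc t (m + 1 + i) ≤ γ * (1/((m:ℝ)+i+1)^3) := h
          _ ≤ γ * (1/((m:ℝ)+i)^2 - 1/((m:ℝ)+i+1)^2) := by
              apply mul_le_mul_of_nonneg_left _ hγ0.le
              exact hk
          _ = γ * (1/((m:ℝ)+i)^2) - γ * (1/((m:ℝ)+i+1)^2) := by ring
      calc ∑ i ∈ Finset.range n, t (m + 1 + i)
          ≤ ∑ i ∈ Finset.range n, (γ * (1/((m:ℝ)+i)^2) - γ * (1/((m:ℝ)+(i+1:ℕ))^2)) :=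
            Finset.sum_le_sum (fun i _ => hstep i)
        _ = γ * (1/((m:ℝ)+(0:ℕ))^2) - γ * (1/((m:ℝ)+n)^2) :=
            Finset.sum_range_sub' (f := fun i : ℕ => γ * (1/((m:ℝ)+i)^2)) n
        _ ≤ γ * (1/(m:ℝ)^2) := by
            have hmn : (0:ℝ) < (m:ℝ)+n := by
              have : (0:ℤ) < m + n := by omega
              exact_mod_cast this
            have : 0 ≤ γ * (1/((m:ℝ)+n)^2) := by positivity
            simp only [Nat.cast_zero, add_zero]
            linarith
    have hutail : ∀ m : ℤ, N ≤ m → u m ≤ 1 + γ * (1/(m:ℝ)^2) := by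
      intro m hm
      have hto : Tendsto (fun n : ℕ => u (m + (n:ℤ))) atTop (nhds 1) :=
        hu1.comp (tendsto_atTop_add_const_left atTop m tendsto_natCast_atTop_atTop)
      have hlb : ∀ n : ℕ, u m - γ * (1/(m:ℝ)^2) ≤ u (m + (n:ℤ)) := by
        intro n
        have h1 := htel m hm n
        have h2 := hcube m hm n
        linarith
      have := ge_of_tendsto hto (Eventually.of_forall hlb)
      linarith
    -- log-boundedness
    set B : ℝ := Real.log (q N) + γ * (1/((N:ℝ)-1)) with hB
    have hlog : ∀ n : ℕ, Real.log (q (N + n)) ≤ B := by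
      intro n
      have hterm : ∀ i : ℕ, Real.log (q (N + (i+1:ℕ))) - Real.log (q (N + i)) ≤
          γ * (1/((N:ℝ)-1+i) - 1/((N:ℝ)-1+(i+1:ℕ))) := by
        intro i
        have hqi : 0 < q (N + i) := (hN (N+i) (by omega)).1.1
        have hqi1 : 0 < q (N + i + 1) := (hN (N+i+1) (by omega)).1.1
        have hui : u (N + i) = q (N + i + 1) / q (N + i) := rfl
        have hupos : 0 < u (N + i) := div_pos hqi1 hqi
        have hlu : Real.log (u (N + i)) ≤ u (N + i) - 1 :=
          Real.log_le_sub_one_of_pos hupos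
        have hld : Real.log (u (N + i)) =
            Real.log (q (N + i + 1)) - Real.log (q (N + i)) := by
          rw [hui, Real.log_div hqi1.ne' hqi.ne']
        have hut := hutail (N + i) (by omega)
        have hcastA : ((N + (i:ℤ) : ℤ) : ℝ) = (N:ℝ) + i := by push_cast; ring
        rw [hcastA] at hut
        have hA2 : (2:ℝ) ≤ (N:ℝ) + i := by
          have : (2:ℤ) ≤ N + i := by omega
          exact_mod_cast this
        have hk := key2 ((N:ℝ)+i) hA2
        have hc1 : ((N + (i+1:ℕ) : ℤ) : ℝ) = (N:ℝ) + i + 1 := by push_cast; ring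
        have hc2 : ((N:ℝ)-1+(i+1:ℕ)) = (N:ℝ) + i := by push_cast; ring
        have hc3 : ((N:ℝ)-1+(i:ℕ)) = (N:ℝ) + i - 1 := by push_cast; ring
        rw [hc2, hc3]
        have hcc : (N + (i+1:ℕ) : ℤ) = N + i + 1 := by push_cast; ring
        rw [hcc]
        calc Real.log (q (N + i + 1)) - Real.log (q (N + i))
            = Real.log (u (N + i)) := hld.symm
          _ ≤ u (N + i) - 1 := hlu
          _ ≤ γ * (1/((N:ℝ)+i)^2) := by linarith
          _ ≤ γ * (1/((N:ℝ)+i-1) - 1/((N:ℝ)+i)) := by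
              apply mul_le_mul_of_nonneg_left _ hγ0.le
              have : ((N:ℝ)+i-1) = ((N:ℝ)+i) - 1 := by ring
              rw [this]
              exact hk
      have hsum : Real.log (q (N + n)) - Real.log (q N) ≤
          γ * (1/((N:ℝ)-1+(0:ℕ)) - 1/((N:ℝ)-1+n)) := by
        have h1 : Real.log (q (N + n)) - Real.log (q N) =
            ∑ i ∈ Finset.range n,
              (Real.log (q (N + (i+1:ℕ))) - Real.log (q (N + i))) := by
          rw [Finset.sum_range_sub (f := fun i : ℕ => Real.log (q (N + i)))]
          simp
        have h2 : ∑ i ∈ Finset.range n,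
              (Real.log (q (N + (i+1:ℕ))) - Real.log (q (N + i)))
            ≤ ∑ i ∈ Finset.range n,
              (γ * (1/((N:ℝ)-1+i)) - γ * (1/((N:ℝ)-1+(i+1:ℕ)))) := by
          apply Finset.sum_le_sum
          intro i _
          have := hterm i
          linarith
        have h3 : ∑ i ∈ Finset.range n,
              (γ * (1/((N:ℝ)-1+i)) - γ * (1/((N:ℝ)-1+(i+1:ℕ))))
            = γ * (1/((N:ℝ)-1+(0:ℕ))) - γ * (1/((N:ℝ)-1+n)) :=
          Finset.sum_range_sub' (f := fun i : ℕ => γ * (1/((N:ℝ)-1+i))) n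
        rw [h1]
        calc _ ≤ _ := h2
          _ = _ := h3
          _ = γ * (1/((N:ℝ)-1+(0:ℕ)) - 1/((N:ℝ)-1+n)) := by ring
      have hNn : (0:ℝ) < (N:ℝ) - 1 + n := by
        have h : (0:ℤ) < N - 1 + n := by omega
        have h2 : ((0:ℤ):ℝ) < ((N - 1 + n : ℤ):ℝ) := by exact_mod_cast h
        push_cast at h2
        linarith
      have hpos2 : 0 ≤ γ * (1/((N:ℝ)-1+n)) := by positivity
      rw [hB]
      have hinv : (0:ℝ) ≤ 1/((N:ℝ)-1+n) := by positivity
      have : γ * (1/((N:ℝ)-1+(0:ℕ)) - 1/((N:ℝ)-1+n)) ≤ γ * (1/((N:ℝ)-1)) := by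
        simp only [Nat.cast_zero, add_zero]
        apply mul_le_mul_of_nonneg_left _ hγ0.le
        linarith
      linarith
    -- contradiction with growth
    obtain ⟨n, hn⟩ := exists_nat_gt ((2/c) * Real.exp B)
    have hNn : N ≤ N + (n:ℤ) := by omega
    have hq0 : 0 < q (N + n) := (hN (N+n) hNn).1.1
    have hgrow : (c/2) * ((N:ℝ)+n) ≤ q (N + n) := by
      have := (hN (N+n) hNn).1.2
      have hcast : ((N + (n:ℤ) : ℤ):ℝ) = (N:ℝ) + n := by push_cast; ring
      rwa [hcast] at this
    have hle : q (N + n) ≤ Real.exp B := by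
      have := hlog n
      calc q (N + n) = Real.exp (Real.log (q (N + n))) := (Real.exp_log hq0).symm
        _ ≤ Real.exp B := Real.exp_le_exp.mpr this
    have hNpos : (0:ℝ) ≤ (N:ℝ) := by
      have : (0:ℤ) ≤ N := by omega
      exact_mod_cast this
    have hn' : (c/2) * (n:ℝ) > Real.exp B := by
      have h2c : (c/2) * ((2/c) * Real.exp B) = Real.exp B := by
        field_simp
      nlinarith
    nlinarith

/-- Degrees of a quasipolynomial solution of the Q-system.  `C` is a generalized Cartan
matrix on a finite set `I`; `(q a)` is a family of quasipolynomials (each given piecewise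
by polynomial constituents of degree `e a` with constant leading coefficient `c a > 0`)
satisfying the Q-system.  Then `∑_b C a b · e b = 2` for every `a`, equivalently
`2·e a − 2 = ∑_{C a b < 0} (−C a b)·e b`; and if the Cartan matrix is invertible over `ℚ`
then `e a = 2·∑_b (C⁻¹) a b`. -/
theorem stmt_10 {I : Type*} [Fintype I] [DecidableEq I]
    (C : I → I → ℤ)
    (hdiag : ∀ a, C a a = 2)
    (hoff : ∀ a b, a ≠ b → C a b ≤ 0)
    (hsymzero : ∀ a b, (C a b < 0 ↔ C b a < 0))
    (q : I → ℤ → ℝ) (e : I → ℕ) (c : I → ℝ)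
    (he : ∀ a, 1 ≤ e a) (hc : ∀ a, 0 < c a)
    (hqp : ∀ a, ∃ ℓ : ℕ, 1 ≤ ℓ ∧ ∃ p : ℤ → Polynomial ℝ,
      (∀ j : ℤ, 0 ≤ j → j < (ℓ : ℤ) →
        (p j).natDegree = e a ∧ (p j).coeff (e a) = c a) ∧
      (∀ m : ℤ, q a m = (p (m % (ℓ : ℤ))).eval (m : ℝ)))
    (hQ : ∀ a, ∀ m : ℤ,
      q a m ^ 2 - q a (m + 1) * q a (m - 1) =
        ∏ b ∈ Finset.univ.filter (fun b => C a b < 0),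
          ∏ k ∈ Finset.range (-(C a b)).toNat,
            q b (Int.fdiv (C b a * m - (k : ℤ)) (C a b))) :
    (∀ a, ∑ b : I, C a b * (e b : ℤ) = 2) ∧
    (∀ a, 2 * (e a : ℤ) - 2 =
      ∑ b ∈ Finset.univ.filter (fun b => C a b < 0), (-(C a b)) * (e b : ℤ)) ∧
    (∀ M : Matrix I I ℚ, (∀ a b, M a b = (C a b : ℚ)) → IsUnit M.det →
      ∀ a, (e a : ℚ) = 2 * ∑ b : I, M⁻¹ a b) := by
  classical
  have hqt : ∀ b, Filter.Tendsto (fun m : ℤ => q b m / (m:ℝ)^(e b)) Filter.atTop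
      (nhds (c b)) := by
    intro b
    obtain ⟨ℓ, hℓ, p, hp1, hp2⟩ := hqp b
    exact qp_tendsto hℓ (fun j h1 h2 => hp1 j h1 h2) hp2
  have key : ∀ a,
      (∑ b ∈ Finset.univ.filter (fun b => C a b < 0), (-(C a b)).toNat * e b) + 2
        = 2 * e a := by
    intro a
    set S := Finset.univ.filter (fun b => C a b < 0) with hS
    set κ : I → ℕ := fun b => (-(C a b)).toNat with hκ
    set d : ℕ := ∑ b ∈ S, κ b * e b with hd
    set K : ℝ := ∏ b ∈ S, ∏ _k ∈ Finset.range (κ b), (c b * ((C b a : ℝ)/(C a b))^(e b)) with hK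
    have hSneg : ∀ b ∈ S, C a b < 0 := fun b hb => (Finset.mem_filter.mp hb).2
    have hK0 : 0 < K := by
      apply Finset.prod_pos
      intro b hb
      apply Finset.prod_pos
      intro k _
      have hyb : ((C a b : ℝ)) < 0 := by exact_mod_cast hSneg b hb
      have hxb : ((C b a : ℝ)) < 0 := by exact_mod_cast (hsymzero a b).mp (hSneg b hb)
      have h : (0:ℝ) < (C b a : ℝ)/(C a b) := div_pos_of_neg_of_neg hxb hyb
      exact mul_pos (hc b) (pow_pos h _)
    have hprod : Tendsto (fun m : ℤ => ∏ b ∈ S, ∏ k ∈ Finset.range (κ b),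
        (q b ((C b a * m - k).fdiv (C a b)) / (m:ℝ)^(e b))) atTop (nhds K) := by
      rw [hK]
      apply tendsto_finset_prod
      intro b hb
      apply tendsto_finset_prod
      intro k _
      exact qp_comp_fdiv (hqt b) (k:ℤ) ((hsymzero a b).mp (hSneg b hb)) (hSneg b hb)
    have hFK : Tendsto (fun m : ℤ =>
        (q a m ^ 2 - q a (m+1) * q a (m-1)) / (m:ℝ)^d) atTop (nhds K) := by
      apply hprod.congr'
      filter_upwards [eventually_ge_atTop (1:ℤ)] with m hm
      have hmp : (0:ℝ) < (m:ℝ) := by exact_mod_cast hm.trans_lt' (by norm_num)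
      rw [hQ a m]
      rw [Finset.prod_congr rfl (fun b hb => Finset.prod_div_distrib
        (f := fun k : ℕ => q b ((C b a * m - k).fdiv (C a b))) (g := fun _ => (m:ℝ)^(e b)))]
      rw [Finset.prod_congr rfl (fun b (hb : b ∈ S) => by
        rw [Finset.prod_const, Finset.card_range, ← pow_mul] :
        ∀ b ∈ S, (∏ k ∈ Finset.range (κ b), q b ((C b a * m - k).fdiv (C a b))) /
          (∏ _k ∈ Finset.range (κ b), (m:ℝ)^(e b)) =
          (∏ k ∈ Finset.range (κ b), q b ((C b a * m - k).fdiv (C a b))) / (m:ℝ)^(e b * κ b))]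
      rw [Finset.prod_div_distrib, Finset.prod_pow_eq_pow_sum]
      congr 1
      rw [hd]
      congr 1
      exact Finset.sum_congr rfl (fun b _ => mul_comm _ _)
    exact degree_core (he a) (hc a) hK0 (hqt a) hFK
  have h2 : ∀ a, 2 * (e a : ℤ) - 2 =
      ∑ b ∈ Finset.univ.filter (fun b => C a b < 0), (-(C a b)) * (e b : ℤ) := by
    intro a
    have hcast : ∑ b ∈ Finset.univ.filter (fun b => C a b < 0), (-(C a b)) * (e b : ℤ)
        = ((∑ b ∈ Finset.univ.filter (fun b => C a b < 0), (-(C a b)).toNat * e b : ℕ) : ℤ) := by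
      push_cast
      apply Finset.sum_congr rfl
      intro b hb
      have hneg : C a b < 0 := (Finset.mem_filter.mp hb).2
      rw [Int.toNat_of_nonneg (by omega)]
    rw [hcast]
    have := key a
    omega
  have h1 : ∀ a, ∑ b : I, C a b * (e b : ℤ) = 2 := by
    intro a
    rw [← Finset.sum_filter_add_sum_filter_not Finset.univ (fun b => C a b < 0)
      (fun b => C a b * (e b : ℤ))]
    have hA : ∑ b ∈ Finset.univ.filter (fun b => C a b < 0), C a b * (e b : ℤ)
        = -(2 * (e a : ℤ) - 2) := by
      rw [h2 a, ← Finset.sum_neg_distrib]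
      apply Finset.sum_congr rfl
      intro b _
      ring
    have hB : ∑ b ∈ Finset.univ.filter (fun b => ¬ C a b < 0), C a b * (e b : ℤ)
        = 2 * (e a : ℤ) := by
      rw [Finset.sum_eq_single_of_mem a (by simp [hdiag a])]
      · rw [hdiag a]
      · intro b hbf hba
        have h0 : C a b ≤ 0 := hoff a b (Ne.symm hba)
        have h1 : ¬ C a b < 0 := by
          simpa using (Finset.mem_filter.mp hbf).2
        have : C a b = 0 := by omega
        rw [this, zero_mul]
    rw [hA, hB]
    ring
  refine ⟨h1, h2, ?_⟩
  intro M hM hdet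
  have hmv : M.mulVec (fun b => (e b : ℚ)) = fun _ => 2 := by
    funext a
    have := h1 a
    simp only [Matrix.mulVec, dotProduct]
    calc ∑ b : I, M a b * (e b : ℚ) = ∑ b : I, ((C a b * (e b : ℤ) : ℤ) : ℚ) := by
          apply Finset.sum_congr rfl
          intro b _
          rw [hM a b]
          push_cast
          ring
      _ = 2 := by rw [← Int.cast_sum, this]; norm_num
  have hev : (fun b => (e b : ℚ)) = M⁻¹.mulVec (fun _ => 2) := by
    rw [← hmv, Matrix.mulVec_mulVec, Matrix.nonsing_inv_mul M hdet, Matrix.one_mulVec]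
  intro a
  have := congrFun hev a
  rw [this]
  simp only [Matrix.mulVec, dotProduct]
  rw [Finset.mul_sum]
  apply Finset.sum_congr rfl
  intro b _
  ring
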